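/- Let G be a group with a proper left-invariant pseudo-metric d_G, and let H, K ≤ G be subgroups such that gr_{H,K}(r) ≥ δ · gr_G(r) for all r ≥ 1 and some δ > 0. If A ⊆ G is exponentially generic in G, then its image Π(A) under the map Π(g) = HgK is exponentially generic in the set of double cosets 𝔻(H,K) = {HgK : g ∈ G}, where genericity in 𝔻(H,K) is measured using the balls B_{H,K}(r). -/

import Mathlib

/-- The open ball of radius `r` about the identity. -/
def ballG {G : Type*} [Group G] (d : G → G → ℝ) (r : ℝ) : Set G := {g | d 1 g < r}

/-- The double coset `HgK` as a subset of `G`. -/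
def dcoset {G : Type*} [Group G] (H K : Subgroup G) (g : G) : Set G :=
  {x | ∃ h ∈ H, ∃ k ∈ K, x = h * g * k}

/-- The set of double cosets meeting the open ball of radius `r`. -/
def ballHK {G : Type*} [Group G] (d : G → G → ℝ) (H K : Subgroup G) (r : ℝ) :
    Set (Set G) :=
  {s | (∃ g : G, s = dcoset H K g) ∧ ∃ x ∈ s, d 1 x < r}

lemma dcoset_eq_of_mem {G : Type*} [Group G] (H K : Subgroup G) {g x : G}
    (hx : x ∈ dcoset H K g) : dcoset H K x = dcoset H K g := by
  obtain ⟨h, hh, k, hk, rfl⟩ := hx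
  ext y
  constructor
  · rintro ⟨h', hh', k', hk', rfl⟩
    exact ⟨h' * h, H.mul_mem hh' hh, k * k', K.mul_mem hk hk', by group⟩
  · rintro ⟨h', hh', k', hk', rfl⟩
    exact ⟨h' * h⁻¹, H.mul_mem hh' (H.inv_mem hh), k⁻¹ * k', K.mul_mem (K.inv_mem hk) hk',
      by group⟩

/-- If `gr_{H,K}(r) ≥ δ·gr_G(r)` for all `r ≥ 1` and some `δ > 0`, then the image
under `Π : g ↦ HgK` of an exponentially generic subset of `G` is exponentially
generic in the set of double cosets `𝔻(H,K)`. -/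
theorem stmt5 {G : Type*} [Group G] (d : G → G → ℝ)
    (hrefl : ∀ g : G, d g g = 0)
    (hsymm : ∀ g₁ g₂ : G, d g₁ g₂ = d g₂ g₁)
    (htri : ∀ g₁ g₂ g₃ : G, d g₁ g₃ ≤ d g₁ g₂ + d g₂ g₃)
    (hinv : ∀ h g₁ g₂ : G, d (h * g₁) (h * g₂) = d g₁ g₂)
    (hproper : ∀ r : ℝ, (ballG d r).Finite)
    (H K : Subgroup G) (δ : ℝ) (hδ : 0 < δ)
    (hgrowth : ∀ r : ℝ, 1 ≤ r →
      δ * ((ballG d r).ncard : ℝ) ≤ ((ballHK d H K r).ncard : ℝ))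
    (A : Set G)
    (hA : ∃ c > (0 : ℝ), ∃ ε ∈ Set.Ioo (0 : ℝ) 1, ∀ r : ℝ, 0 < r →
      |(((A ∩ ballG d r).ncard : ℝ) / ((ballG d r).ncard : ℝ)) - 1| ≤ c * ε ^ r) :
    ∃ c > (0 : ℝ), ∃ ε ∈ Set.Ioo (0 : ℝ) 1, ∀ r : ℝ, 0 < r →
      |((((dcoset H K '' A) ∩ ballHK d H K r).ncard : ℝ) /
          ((ballHK d H K r).ncard : ℝ)) - 1| ≤ c * ε ^ r := by
  obtain ⟨c, hc, ε, ⟨hε0, hε1⟩, hAb⟩ := hA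
  refine ⟨max (c / δ) ε⁻¹, lt_max_of_lt_right (by positivity), ε, ⟨hε0, hε1⟩, ?_⟩
  intro r hr
  have hεr : (0 : ℝ) < ε ^ r := Real.rpow_pos_of_pos hε0 r
  set BG := ballG d r with hBG
  set BHK := ballHK d H K r with hBHKdef
  set PA := dcoset H K '' A with hPA
  have hfinBG : BG.Finite := hproper r
  -- every coset in BHK is the coset of one of its points in BG
  have hmem : ∀ s ∈ BHK, ∃ x ∈ BG, s = dcoset H K x := by
    rintro s ⟨⟨g, rfl⟩, x, hx, hxr⟩
    exact ⟨x, hxr, (dcoset_eq_of_mem H K hx).symm⟩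
  have hBHKsub : BHK ⊆ dcoset H K '' BG := by
    intro s hs
    obtain ⟨x, hx, rfl⟩ := hmem s hs
    exact ⟨x, hx, rfl⟩
  have hfinBHK : BHK.Finite := (hfinBG.image _).subset hBHKsub
  have hsub : PA ∩ BHK ⊆ BHK := Set.inter_subset_right
  have hle1 : ((PA ∩ BHK).ncard : ℝ) / (BHK.ncard : ℝ) ≤ 1 := by
    apply div_le_one_of_le₀
    · exact_mod_cast Set.ncard_le_ncard hsub hfinBHK
    · positivity
  have hge0 : (0 : ℝ) ≤ ((PA ∩ BHK).ncard : ℝ) / (BHK.ncard : ℝ) := by positivity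
  rcases le_or_gt 1 r with hr1 | hr1
  · -- main case r ≥ 1
    -- injection from BHK \ PA into BG \ A
    have hchoice : ∀ s ∈ BHK \ PA, ∃ x, x ∈ s ∧ x ∈ BG ∧ x ∉ A := by
      rintro s ⟨hs, hsP⟩
      obtain ⟨⟨g, rfl⟩, x, hx, hxr⟩ := hs
      refine ⟨x, hx, hxr, fun hxA => hsP ?_⟩
      exact ⟨x, hxA, dcoset_eq_of_mem H K hx⟩
    classical
    set f : Set G → G := fun s =>
      if h : ∃ x, x ∈ s ∧ x ∈ BG ∧ x ∉ A then h.choose else 1 with hf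
    have hfspec : ∀ s ∈ BHK \ PA, f s ∈ s ∧ f s ∈ BG ∧ f s ∉ A := by
      intro s hs
      have h := hchoice s hs
      simp only [hf, dif_pos h]
      exact h.choose_spec
    have hcard_le : (BHK \ PA).ncard ≤ (BG \ A).ncard := by
      refine Set.ncard_le_ncard_of_injOn f ?_ ?_ (hfinBG.diff (t := A))
      · intro s hs
        exact ⟨(hfspec s hs).2.1, (hfspec s hs).2.2⟩
      · intro s hs t ht hst
        obtain ⟨⟨g, hg⟩, -⟩ := hs.1
        obtain ⟨⟨g', hg'⟩, -⟩ := ht.1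
        have h1 : s = dcoset H K (f s) := by
          rw [hg]; exact (dcoset_eq_of_mem H K (hg ▸ (hfspec s hs).1)).symm
        have h2 : t = dcoset H K (f t) := by
          rw [hg']; exact (dcoset_eq_of_mem H K (hg' ▸ (hfspec t ht).1)).symm
        rw [h1, h2, hst]
    -- cardinal bookkeeping
    have hsplit1 : (BHK ∩ PA).ncard + (BHK \ PA).ncard = BHK.ncard :=
      Set.ncard_inter_add_ncard_diff_eq_ncard BHK PA hfinBHK
    have hsplit2 : (BG ∩ A).ncard + (BG \ A).ncard = BG.ncard :=
      Set.ncard_inter_add_ncard_diff_eq_ncard BG A hfinBG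
    have h1BG : (1 : G) ∈ BG := by
      simp only [hBG, ballG, Set.mem_setOf_eq, hrefl]; exact hr
    have hBGpos : (0 : ℝ) < (BG.ncard : ℝ) := by
      have : 0 < BG.ncard := (Set.ncard_pos hfinBG).mpr ⟨1, h1BG⟩
      exact_mod_cast this
    have hgrow := hgrowth r hr1
    have hBHKpos : (0 : ℝ) < (BHK.ncard : ℝ) :=
      lt_of_lt_of_le (by positivity) hgrow
    have hA1 := hAb r hr
    have hAle : ((A ∩ BG).ncard : ℝ) / (BG.ncard : ℝ) ≥ 1 - c * ε ^ r := by
      have := abs_le.mp hA1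
      linarith [this.1]
    -- (BG \ A).ncard ≤ c ε^r * BG.ncard
    have hdiffBG : ((BG \ A).ncard : ℝ) ≤ c * ε ^ r * (BG.ncard : ℝ) := by
      have h2 : ((BG ∩ A).ncard : ℝ) + ((BG \ A).ncard : ℝ) = (BG.ncard : ℝ) := by
        exact_mod_cast hsplit2
      have hic : (BG ∩ A).ncard = (A ∩ BG).ncard := by rw [Set.inter_comm]
      have h3 : ((A ∩ BG).ncard : ℝ) ≥ (1 - c * ε ^ r) * (BG.ncard : ℝ) :=
        (le_div_iff₀ hBGpos).mp hAle
      rw [hic] at h2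
      nlinarith
    have hdiffBHK : ((BHK \ PA).ncard : ℝ) ≤ c * ε ^ r * (BG.ncard : ℝ) :=
      le_trans (by exact_mod_cast hcard_le) hdiffBG
    have h1 : ((BHK ∩ PA).ncard : ℝ) + ((BHK \ PA).ncard : ℝ) = (BHK.ncard : ℝ) := by
      exact_mod_cast hsplit1
    have hic2 : (BHK ∩ PA).ncard = (PA ∩ BHK).ncard := by rw [Set.inter_comm]
    rw [hic2] at h1
    have habs : |((PA ∩ BHK).ncard : ℝ) / (BHK.ncard : ℝ) - 1|
        = 1 - ((PA ∩ BHK).ncard : ℝ) / (BHK.ncard : ℝ) := by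
      rw [abs_of_nonpos (by linarith)]; ring
    rw [habs]
    have hcd : c / δ * δ = c := div_mul_cancel₀ c (ne_of_gt hδ)
    have key : 1 - ((PA ∩ BHK).ncard : ℝ) / (BHK.ncard : ℝ) ≤ (c / δ) * ε ^ r := by
      have hle : (1 - (c / δ) * ε ^ r) * (BHK.ncard : ℝ) ≤ ((PA ∩ BHK).ncard : ℝ) := by
        nlinarith [mul_nonneg (le_of_lt (mul_pos (div_pos hc hδ) hεr))
          (sub_nonneg.mpr hgrow)]
      have := (le_div_iff₀ hBHKpos).mpr hle
      linarith
    calc 1 - ((PA ∩ BHK).ncard : ℝ) / (BHK.ncard : ℝ) ≤ (c / δ) * ε ^ r := key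
      _ ≤ max (c / δ) ε⁻¹ * ε ^ r :=
        mul_le_mul_of_nonneg_right (le_max_left _ _) (le_of_lt hεr)
  · -- small r : bound by 1
    have h1 : |((PA ∩ BHK).ncard : ℝ) / (BHK.ncard : ℝ) - 1| ≤ 1 := by
      rw [abs_le]; constructor <;> linarith
    have h2 : (1 : ℝ) ≤ ε⁻¹ * ε ^ r := by
      have hle : ε ≤ ε ^ r := by
        have := Real.rpow_le_rpow_of_exponent_ge hε0 (le_of_lt hε1) (le_of_lt hr1)
        rwa [Real.rpow_one] at this
      calc (1:ℝ) = ε⁻¹ * ε := (inv_mul_cancel₀ (ne_of_gt hε0)).symm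
        _ ≤ ε⁻¹ * ε ^ r := mul_le_mul_of_nonneg_left hle (by positivity)
    calc |((PA ∩ BHK).ncard : ℝ) / (BHK.ncard : ℝ) - 1| ≤ 1 := h1
      _ ≤ ε⁻¹ * ε ^ r := h2
      _ ≤ max (c / δ) ε⁻¹ * ε ^ r := by
          apply mul_le_mul_of_nonneg_right (le_max_right _ _) (le_of_lt hεr)
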